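/- Let γ ∈ (0,π) and let C = { (r cos θ, r sin θ) : r ≥ 0, θ ∈ [0,γ] } ⊂ ℝ² be the closed sector of opening angle γ with one boundary ray along the positive x-axis. Then for every y = (y₁, y₂) ∈ C, the Lebesgue area of (y − C) ∩ C equals y₁·y₂ − cot(γ)·y₂². -/

import Mathlib

open Real MeasureTheory


lemma key_ineq (s t c : ℝ) (hs : 0 ≤ s) (ht : 0 ≤ t) (hc : -1 ≤ c) (hc1 : c ≤ 1)
    (R : ℝ) (hR : 0 ≤ R) (hR2 : R ^ 2 = s ^ 2 + 2 * s * t * c + t ^ 2) :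
    R * c ≤ s + t * c := by
  rcases le_or_gt 0 c with h | h
  · have hRst : R ≤ s + t := by nlinarith [sq_nonneg (s + t - R), sq_nonneg (s + t + R), mul_nonneg hs ht]
    nlinarith
  · rcases le_or_gt 0 (t + s * c) with h2 | h2
    · have hsq : (t + s * c) ^ 2 ≤ R ^ 2 := by nlinarith [mul_nonneg (sq_nonneg s) (by nlinarith : (0:ℝ) ≤ 1 - c ^ 2)]
      have hle : t + s * c ≤ R := by
        have := Real.sqrt_le_sqrt hsq
        rwa [Real.sqrt_sq h2, Real.sqrt_sq hR] at this
      have h3 : R * c ≤ (t + s * c) * c := mul_le_mul_of_nonpos_right hle h.le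
      have h4 : s * c ^ 2 ≤ s := by nlinarith
      nlinarith
    · nlinarith [mul_nonneg hR (neg_nonneg.2 h.le)]

lemma cone_eq (γ : ℝ) (hγ : γ ∈ Set.Ioo 0 π) :
    {p : ℝ × ℝ | ∃ r ≥ (0:ℝ), ∃ θ ∈ Set.Icc (0:ℝ) γ, p = (r * Real.cos θ, r * Real.sin θ)}
    = {p : ℝ × ℝ | ∃ s ≥ (0:ℝ), ∃ t ≥ (0:ℝ), p = (s + t * Real.cos γ, t * Real.sin γ)} := by
  obtain ⟨hγ0, hγπ⟩ := hγ
  have hsγ : 0 < Real.sin γ := Real.sin_pos_of_pos_of_lt_pi hγ0 hγπ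
  ext p
  simp only [Set.mem_setOf_eq]
  constructor
  · rintro ⟨r, hr, θ, ⟨hθ0, hθγ⟩, rfl⟩
    refine ⟨r * Real.sin (γ - θ) / Real.sin γ, ?_, r * Real.sin θ / Real.sin γ, ?_, ?_⟩
    · exact div_nonneg (mul_nonneg hr (Real.sin_nonneg_of_nonneg_of_le_pi (by linarith) (by linarith))) hsγ.le
    · exact div_nonneg (mul_nonneg hr (Real.sin_nonneg_of_nonneg_of_le_pi hθ0 (le_trans hθγ hγπ.le))) hsγ.le
    · have hss := Real.sin_sub γ θ
      have : (Real.sin γ) ≠ 0 := ne_of_gt hsγ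
      refine Prod.ext ?_ ?_ <;> simp only [] <;> field_simp <;> nlinarith [Real.sin_sub γ θ]
  · rintro ⟨s, hs, t, ht, rfl⟩
    set c := Real.cos γ with hc
    have hc1 : c ≤ 1 := Real.cos_le_one γ
    have hcm1 : -1 ≤ c := Real.neg_one_le_cos γ
    set x : ℝ := s + t * c with hxdef
    set z : ℝ := t * Real.sin γ with hzdef
    have hz0 : 0 ≤ z := mul_nonneg ht hsγ.le
    set R := Real.sqrt (x ^ 2 + z ^ 2) with hRdef
    have hR0 : 0 ≤ R := Real.sqrt_nonneg _
    have hR2 : R ^ 2 = x ^ 2 + z ^ 2 := Real.sq_sqrt (by positivity)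
    have hR2' : R ^ 2 = s ^ 2 + 2 * s * t * c + t ^ 2 := by
      have hpyth := Real.sin_sq_add_cos_sq γ
      rw [hR2, hxdef, hzdef]; nlinarith
    rcases eq_or_lt_of_le hR0 with h0 | hRpos
    · have hx0 : x = 0 ∧ z = 0 := by
        have : x ^ 2 + z ^ 2 = 0 := by rw [← hR2, ← h0]; ring
        constructor <;> nlinarith [sq_nonneg x, sq_nonneg z]
      exact ⟨0, le_refl _, 0, ⟨le_refl _, hγ0.le⟩, by simp [hx0.1, hx0.2]⟩
    · have hkey : R * c ≤ x := key_ineq s t c hs ht hcm1 hc1 R hR0 hR2'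
      have hxR : x ≤ R := by nlinarith [sq_nonneg z]
      have hxRm : -R ≤ x := by nlinarith [sq_nonneg z, sq_nonneg (x + R)]
      have hd1 : x / R ≤ 1 := (div_le_one hRpos).2 hxR
      have hdm1 : -1 ≤ x / R := by rw [neg_le, ← neg_div]; exact (div_le_one hRpos).2 (by linarith)
      refine ⟨R, hR0, Real.arccos (x / R), ⟨Real.arccos_nonneg _, ?_⟩, ?_⟩
      · have hγarc : Real.arccos c = γ := Real.arccos_cos hγ0.le hγπ.le
        have hcx : c ≤ x / R := (le_div_iff₀ hRpos).2 (by linarith [hkey])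
        by_contra hlt
        push_neg at hlt
        have hmem1 : γ ∈ Set.Icc 0 π := ⟨hγ0.le, hγπ.le⟩
        have hmem2 : Real.arccos (x / R) ∈ Set.Icc 0 π := ⟨Real.arccos_nonneg _, Real.arccos_le_pi _⟩
        have := Real.strictAntiOn_cos hmem1 hmem2 hlt
        rw [Real.cos_arccos hdm1 hd1] at this
        exact absurd hcx (not_le.2 this)
      · have hcos : Real.cos (Real.arccos (x / R)) = x / R := Real.cos_arccos hdm1 hd1
        have hsin : Real.sin (Real.arccos (x / R)) = Real.sqrt (1 - (x / R) ^ 2) := Real.sin_arccos _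
        have h1 : R * Real.cos (Real.arccos (x / R)) = x := by
          rw [hcos]; field_simp
        have h2 : R * Real.sin (Real.arccos (x / R)) = z := by
          rw [hsin]
          have : R * Real.sqrt (1 - (x / R) ^ 2) = Real.sqrt (R ^ 2 * (1 - (x / R) ^ 2)) := by
            rw [Real.sqrt_mul (sq_nonneg R), Real.sqrt_sq hR0]
          rw [this]
          have hRne : (R : ℝ) ^ 2 ≠ 0 := by positivity
          have hz2 : R ^ 2 * (1 - (x / R) ^ 2) = z ^ 2 := by
            rw [div_pow, mul_sub, mul_one, mul_div_cancel₀ _ hRne]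
            linarith [hR2]
          rw [hz2, Real.sqrt_sq hz0]
        exact Prod.ext (by simp [h1]) (by simp [h2])

noncomputable def Tmap (c sg : ℝ) : (ℝ × ℝ) →ₗ[ℝ] (ℝ × ℝ) :=
  LinearMap.prod (LinearMap.fst ℝ ℝ ℝ + c • LinearMap.snd ℝ ℝ ℝ) (sg • LinearMap.snd ℝ ℝ ℝ)

lemma Tmap_apply (c sg : ℝ) (p : ℝ × ℝ) : Tmap c sg p = (p.1 + c * p.2, sg * p.2) := rfl

lemma Tmap_det (c sg : ℝ) : LinearMap.det (Tmap c sg) = sg := by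
  have := LinearMap.det_toMatrix (Module.Basis.finTwoProd ℝ) (Tmap c sg)
  rw [← this]
  rw [Matrix.det_fin_two]
  simp [LinearMap.toMatrix_apply, Tmap_apply, Module.Basis.finTwoProd_zero, Module.Basis.finTwoProd_one]

/-- For the closed planar sector `C` of opening angle `γ ∈ (0,π)` with one boundary ray
along the positive `x`-axis, and any `y ∈ C`, the area of `(y - C) ∩ C` equals
`y₁ y₂ - cot(γ) y₂²`. -/
theorem sector_intersection_area (γ : ℝ) (hγ : γ ∈ Set.Ioo 0 π)
    (C : Set (ℝ × ℝ))
    (hC : C = {p : ℝ × ℝ | ∃ r ≥ (0 : ℝ), ∃ θ ∈ Set.Icc (0 : ℝ) γ,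
      p = (r * Real.cos θ, r * Real.sin θ)})
    (y : ℝ × ℝ) (hy : y ∈ C) :
    (volume (((fun c => y - c) '' C) ∩ C)).toReal =
      y.1 * y.2 - (Real.cos γ / Real.sin γ) * y.2 ^ 2 := by
  obtain ⟨hγ0, hγπ⟩ := hγ
  have hsγ : 0 < Real.sin γ := Real.sin_pos_of_pos_of_lt_pi hγ0 hγπ
  set c := Real.cos γ with hcdef
  set sg := Real.sin γ with hsgdef
  set T := Tmap c sg with hTdef
  have hCeq : C = T '' {p : ℝ × ℝ | 0 ≤ p.1 ∧ 0 ≤ p.2} := by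
    rw [hC, cone_eq γ ⟨hγ0, hγπ⟩]
    ext p
    simp only [Set.mem_setOf_eq, Set.mem_image, Tmap_apply]
    constructor
    · rintro ⟨s, hs, t, ht, rfl⟩
      exact ⟨(s, t), ⟨hs, ht⟩, by rw [hTdef]; simp [Tmap_apply, mul_comm, hcdef, hsgdef]⟩
    · rintro ⟨⟨s, t⟩, ⟨hs, ht⟩, rfl⟩
      exact ⟨s, hs, t, ht, by rw [hTdef]; simp [Tmap_apply, mul_comm, hcdef, hsgdef]⟩
  have hinj : Function.Injective T := by
    intro p q h
    rw [hTdef] at h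
    simp only [Tmap_apply, Prod.mk.injEq] at h
    have h2 : p.2 = q.2 := by
      have := h.2
      field_simp [ne_of_gt hsγ] at this
      exact this
    have h1 : p.1 = q.1 := by have := h.1; rw [h2] at this; linarith
    exact Prod.ext h1 h2
  -- get s₀ t₀
  obtain ⟨⟨s₀, t₀⟩, ⟨hs₀, ht₀⟩, hyT⟩ := hCeq ▸ hy
  have hy1 : y.1 = s₀ + c * t₀ := by rw [← hyT]; rfl
  have hy2 : y.2 = sg * t₀ := by rw [← hyT]; rfl
  -- intersection
  have hset : ((fun c => y - c) '' C) ∩ C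
      = T '' (Set.Icc (0 : ℝ) s₀ ×ˢ Set.Icc (0 : ℝ) t₀) := by
    have himg : (fun c => y - c) '' C = {p | y - p ∈ C} := by
      ext p
      constructor
      · rintro ⟨q, hq, rfl⟩; simpa [sub_sub_cancel] using hq
      · intro h; exact ⟨y - p, h, by simp⟩
    rw [himg]
    ext p
    simp only [Set.mem_inter_iff, Set.mem_setOf_eq, hCeq, Set.mem_image]
    constructor
    · rintro ⟨⟨q, ⟨hq1, hq2⟩, hqe⟩, ⟨w, ⟨hw1, hw2⟩, rfl⟩⟩
      refine ⟨w, ?_, rfl⟩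
      have hsub : y - T w = T ((s₀, t₀) - w) := by rw [map_sub, ← hyT]
      rw [hsub] at hqe
      have : q = (s₀, t₀) - w := hinj hqe
      rw [this] at hq1 hq2
      simp only [Prod.fst_sub, Prod.snd_sub] at hq1 hq2
      exact ⟨⟨hw1, by linarith⟩, ⟨hw2, by linarith⟩⟩
    · rintro ⟨w, ⟨⟨hw1, hw1'⟩, hw2, hw2'⟩, rfl⟩
      refine ⟨⟨(s₀, t₀) - w, ⟨by simpa using by linarith, by simpa using by linarith⟩, ?_⟩,
        ⟨w, ⟨hw1, hw2⟩, rfl⟩⟩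
      rw [map_sub, ← hyT]
  rw [hset]
  have hdet : LinearMap.det T = sg := Tmap_det c sg
  have hHaar : volume (T '' (Set.Icc (0 : ℝ) s₀ ×ˢ Set.Icc (0 : ℝ) t₀))
      = ENNReal.ofReal |LinearMap.det T| * volume (Set.Icc (0 : ℝ) s₀ ×ˢ Set.Icc (0 : ℝ) t₀) := by
    exact Measure.addHaar_image_linearMap volume T _
  rw [hHaar, hdet, abs_of_pos hsγ]
  have hvol : volume (Set.Icc (0 : ℝ) s₀ ×ˢ Set.Icc (0 : ℝ) t₀)
      = ENNReal.ofReal s₀ * ENNReal.ofReal t₀ := by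
    rw [Measure.volume_eq_prod, Measure.prod_prod, Real.volume_Icc, Real.volume_Icc]
    simp
  rw [hvol, ← ENNReal.ofReal_mul hs₀, ← ENNReal.ofReal_mul hsγ.le,
    ENNReal.toReal_ofReal (mul_nonneg hsγ.le (mul_nonneg hs₀ ht₀))]
  rw [hy1, hy2]
  field_simp
  ring
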